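/- Let G be a finite simple graph on vertex set V with edge-weight function w assigning to each edge a nonnegative real number, let W ⊆ V, and let B = {b ∈ W : b has a neighbor of G outside W} be the border vertices of W. Define the graph H on the vertex set (V \ W) ∪ B as follows: two vertices x, y of H with not both x, y in B are adjacent in H iff they are adjacent in G, with weight w({x,y}); two distinct vertices x, y ∈ B are adjacent in H iff they are joined by a walk of G lying entirely inside W, and then the H-weight of {x,y} is the weighted distance between x and y in the induced subgraph G[W]. Then for all x, y ∈ (V \ W) ∪ B, the weighted distance between x and y in H equals the weighted distance between x and y in G. -/

import Mathlib

/-- The weight of a walk: the sum of the weights of its edges. -/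
def walkWeight {V : Type*} {G : SimpleGraph V} (w : V → V → NNReal) :
    ∀ {x y : V}, G.Walk x y → NNReal :=
  fun p => (p.darts.map (fun d => w d.fst d.snd)).sum

/-- The weighted distance between two vertices: the infimum in `ℝ≥0∞` of the
weights of all walks between them (`∞` if there is no such walk). -/
noncomputable def wdist {V : Type*} (G : SimpleGraph V) (w : V → V → NNReal) (x y : V) :
    ENNReal :=
  ⨅ (p : G.Walk x y), (walkWeight w p : ENNReal)

/-- The border vertices of `W`: vertices of `W` having a neighbor outside `W`. -/
def borderSet {V : Type*} (G : SimpleGraph V) (W : Set V) : Set V :=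
  {b | b ∈ W ∧ ∃ y, y ∉ W ∧ G.Adj b y}

section helpers
open SimpleGraph
variable {V : Type*} {G : SimpleGraph V} (w : V → V → NNReal)

lemma walkWeight_nil (x : V) : walkWeight w (Walk.nil : G.Walk x x) = 0 := rfl

lemma walkWeight_cons {x y z : V} (h : G.Adj x y) (p : G.Walk y z) :
    walkWeight w (Walk.cons h p) = w x y + walkWeight w p := by
  simp [walkWeight]

lemma walkWeight_append {x y z : V} (p : G.Walk x y) (q : G.Walk y z) :
    walkWeight w (p.append q) = walkWeight w p + walkWeight w q := by
  simp [walkWeight]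

lemma wdist_le_walk {x y : V} (p : G.Walk x y) :
    wdist G w x y ≤ walkWeight w p := iInf_le _ p

lemma wdist_self_le (x : V) : wdist G w x x ≤ 0 := by
  simpa [walkWeight_nil] using wdist_le_walk w (Walk.nil : G.Walk x x)

lemma wdist_triangle (x y z : V) :
    wdist G w x z ≤ wdist G w x y + wdist G w y z := by
  have hrw : wdist G w x y + wdist G w y z =
      ⨅ (p : G.Walk x y) (q : G.Walk y z),
        ((walkWeight w p : ENNReal) + (walkWeight w q : ENNReal)) := by
    rw [wdist, ENNReal.iInf_add]
    exact iInf_congr fun p => by rw [wdist, ENNReal.add_iInf]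
  rw [hrw]
  refine le_iInf₂ fun p q => ?_
  refine (wdist_le_walk w (p.append q)).trans_eq ?_
  rw [walkWeight_append]
  push_cast
  ring

lemma wdist_le_adj {x y : V} (h : G.Adj x y) : wdist G w x y ≤ w x y := by
  simpa [walkWeight_cons, walkWeight_nil] using
    wdist_le_walk w (Walk.cons h Walk.nil)

lemma wdist_adj_step {x v : V} (h : G.Adj x v) (y : V) :
    wdist G w x y ≤ (w x v : ENNReal) + wdist G w v y :=
  (wdist_triangle w x v y).trans (add_le_add_left (wdist_le_adj w h) _)

lemma wdist_le_wdist_induce {W : Set V} (x y : W) :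
    wdist G w x.val y.val ≤ wdist (G.induce W) (fun a b : W => w a.val b.val) x y := by
  refine le_iInf fun p => ?_
  induction p with
  | nil => exact wdist_self_le w _
  | @cons a b c h q ih =>
    refine (wdist_adj_step w h c.val).trans ?_
    rw [walkWeight_cons]
    push_cast
    exact add_le_add_right ih _

end helpers

section key
open SimpleGraph

lemma ddg_key {V : Type*} (G : SimpleGraph V) (w : V → V → NNReal) (W : Set V)
    (H : SimpleGraph ↥(Wᶜ ∪ borderSet G W))
    (wH : ↥(Wᶜ ∪ borderSet G W) → ↥(Wᶜ ∪ borderSet G W) → NNReal)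
    (hadj₁ : ∀ x y : ↥(Wᶜ ∪ borderSet G W),
      ¬ (x.val ∈ borderSet G W ∧ y.val ∈ borderSet G W) →
      (H.Adj x y ↔ G.Adj x.val y.val))
    (hadj₂ : ∀ (x y : ↥(Wᶜ ∪ borderSet G W))
      (hx : x.val ∈ borderSet G W) (hy : y.val ∈ borderSet G W), x ≠ y →
      (H.Adj x y ↔ (G.induce W).Reachable ⟨x.val, hx.1⟩ ⟨y.val, hy.1⟩))
    (hwH₁ : ∀ x y : ↥(Wᶜ ∪ borderSet G W), H.Adj x y →
      ¬ (x.val ∈ borderSet G W ∧ y.val ∈ borderSet G W) → wH x y = w x.val y.val)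
    (hwH₂ : ∀ (x y : ↥(Wᶜ ∪ borderSet G W))
      (hx : x.val ∈ borderSet G W) (hy : y.val ∈ borderSet G W), H.Adj x y →
      (wH x y : ENNReal) =
        wdist (G.induce W) (fun a b => w a.val b.val) ⟨x.val, hx.1⟩ ⟨y.val, hy.1⟩) :
    ∀ n : ℕ,
      (∀ (a b : V) (ha : a ∈ Wᶜ ∪ borderSet G W) (hb : b ∈ Wᶜ ∪ borderSet G W)
          (p : G.Walk a b), p.length ≤ n →
          wdist H wH ⟨a, ha⟩ ⟨b, hb⟩ ≤ walkWeight w p) ∧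
      (∀ (b' v y : V) (hb' : b' ∈ borderSet G W) (hv : v ∈ W)
          (hy : y ∈ Wᶜ ∪ borderSet G W)
          (r : (G.induce W).Walk ⟨b', hb'.1⟩ ⟨v, hv⟩) (q : G.Walk v y),
          q.length ≤ n →
          wdist H wH ⟨b', Or.inr hb'⟩ ⟨y, hy⟩ ≤
            (walkWeight (fun a b : W => w a.val b.val) r : ENNReal) + walkWeight w q) := by
  intro n
  induction n with
  | zero =>
    constructor
    · intro a b ha hb p hlen
      cases p with
      | nil => exact (wdist_self_le wH _).trans (zero_le')
      | cons h q => simp [Walk.length_cons] at hlen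
    · intro b' v y hb' hv hy r q hlen
      cases q with
      | nil =>
        have hy' : v ∈ Wᶜ ∨ v ∈ borderSet G W := hy
        have hvB : v ∈ borderSet G W := hy'.resolve_left (fun h => h hv)
        by_cases hbv : b' = v
        · subst hbv
          exact (wdist_self_le wH _).trans (zero_le')
        · have hne : (⟨b', Or.inr hb'⟩ : ↥(Wᶜ ∪ borderSet G W)) ≠ ⟨v, hy⟩ :=
            fun hc => hbv (congrArg Subtype.val hc)
          have hAdj : H.Adj ⟨b', Or.inr hb'⟩ ⟨v, hy⟩ :=
            (hadj₂ _ _ hb' hvB hne).mpr ⟨r⟩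
          refine (wdist_le_adj wH hAdj).trans ?_
          rw [hwH₂ _ _ hb' hvB hAdj]
          exact ((wdist_le_walk _ r).trans le_self_add)
      | cons h q => simp [Walk.length_cons] at hlen
  | succ n IH =>
    constructor
    · intro a b ha hb p hlen
      cases p with
      | nil => exact IH.1 a a ha hb Walk.nil (Nat.zero_le n)
      | @cons _ v _ h q =>
        have hq : q.length ≤ n := by
          simp only [Walk.length_cons] at hlen; omega
        by_cases hvW : v ∈ W
        · by_cases haW : a ∈ W
          · have ha' : a ∈ Wᶜ ∨ a ∈ borderSet G W := ha
            have haB : a ∈ borderSet G W := ha'.resolve_left (fun hc => hc haW)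
            have hadj' : (G.induce W).Adj ⟨a, haB.1⟩ ⟨v, hvW⟩ := h
            have key := IH.2 a v b haB hvW hb (Walk.cons hadj' Walk.nil) q hq
            refine le_trans key (le_of_eq ?_)
            rw [walkWeight_cons, walkWeight_cons, walkWeight_nil]
            push_cast
            ring
          · have hvB : v ∈ borderSet G W := ⟨hvW, a, haW, h.symm⟩
            have hnb : ¬((⟨a, ha⟩ : ↥(Wᶜ ∪ borderSet G W)).val ∈ borderSet G W ∧
                (⟨v, Or.inr hvB⟩ : ↥(Wᶜ ∪ borderSet G W)).val ∈ borderSet G W) :=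
              fun hc => haW hc.1.1
            have hAdj : H.Adj ⟨a, ha⟩ ⟨v, Or.inr hvB⟩ := (hadj₁ _ _ hnb).mpr h
            have hwv := hwH₁ _ _ hAdj hnb
            have key := IH.2 v v b hvB hvW hb Walk.nil q hq
            have key' : wdist H wH ⟨v, Or.inr hvB⟩ ⟨b, hb⟩ ≤ (walkWeight w q : ENNReal) := by
              simpa [walkWeight_nil] using key
            refine (wdist_adj_step wH hAdj ⟨b, hb⟩).trans ?_
            rw [hwv, walkWeight_cons]
            push_cast
            exact add_le_add_right key' _
        · have hvS : v ∈ Wᶜ ∪ borderSet G W := Or.inl hvW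
          have hnb : ¬((⟨a, ha⟩ : ↥(Wᶜ ∪ borderSet G W)).val ∈ borderSet G W ∧
              (⟨v, hvS⟩ : ↥(Wᶜ ∪ borderSet G W)).val ∈ borderSet G W) :=
            fun hc => hvW hc.2.1
          have hAdj : H.Adj ⟨a, ha⟩ ⟨v, hvS⟩ := (hadj₁ _ _ hnb).mpr h
          have hwv := hwH₁ _ _ hAdj hnb
          have key := IH.1 v b hvS hb q hq
          refine (wdist_adj_step wH hAdj ⟨b, hb⟩).trans ?_
          rw [hwv, walkWeight_cons]
          push_cast
          exact add_le_add_right key _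
    · intro b' v y hb' hv hy r q hlen
      cases q with
      | nil => exact IH.2 b' v v hb' hv hy r Walk.nil (Nat.zero_le n)
      | @cons _ u _ h q' =>
        have hq' : q'.length ≤ n := by
          simp only [Walk.length_cons] at hlen; omega
        by_cases huW : u ∈ W
        · have hadj' : (G.induce W).Adj ⟨v, hv⟩ ⟨u, huW⟩ := h
          have key := IH.2 b' u y hb' huW hy (r.append (Walk.cons hadj' Walk.nil)) q' hq'
          refine le_trans key (le_of_eq ?_)
          rw [walkWeight_append, walkWeight_cons, walkWeight_nil, walkWeight_cons]
          push_cast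
          ring
        · have hvB : v ∈ borderSet G W := ⟨hv, u, huW, h⟩
          have huS : u ∈ Wᶜ ∪ borderSet G W := Or.inl huW
          have hnb : ¬((⟨v, Or.inr hvB⟩ : ↥(Wᶜ ∪ borderSet G W)).val ∈ borderSet G W ∧
              (⟨u, huS⟩ : ↥(Wᶜ ∪ borderSet G W)).val ∈ borderSet G W) :=
            fun hc => huW hc.2.1
          have hAdj : H.Adj ⟨v, Or.inr hvB⟩ ⟨u, huS⟩ := (hadj₁ _ _ hnb).mpr h
          have hwvu := hwH₁ _ _ hAdj hnb
          have key := IH.1 u y huS hy q' hq'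
          have step1 : wdist H wH ⟨b', Or.inr hb'⟩ ⟨v, Or.inr hvB⟩ ≤
              (walkWeight (fun a b : W => w a.val b.val) r : ENNReal) := by
            by_cases hbv : b' = v
            · subst hbv
              exact (wdist_self_le wH _).trans (zero_le')
            · have hne : (⟨b', Or.inr hb'⟩ : ↥(Wᶜ ∪ borderSet G W)) ≠ ⟨v, Or.inr hvB⟩ :=
                fun hc => hbv (congrArg Subtype.val hc)
              have hAdj2 : H.Adj ⟨b', Or.inr hb'⟩ ⟨v, Or.inr hvB⟩ :=
                (hadj₂ _ _ hb' hvB hne).mpr ⟨r⟩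
              refine (wdist_le_adj wH hAdj2).trans ?_
              rw [hwH₂ _ _ hb' hvB hAdj2]
              exact wdist_le_walk _ r
          have step2 : wdist H wH ⟨v, Or.inr hvB⟩ ⟨y, hy⟩ ≤
              (w v u : ENNReal) + walkWeight w q' := by
            refine (wdist_adj_step wH hAdj ⟨y, hy⟩).trans ?_
            rw [hwvu]
            exact add_le_add_right key _
          refine (wdist_triangle wH _ ⟨v, Or.inr hvB⟩ _).trans ?_
          refine (add_le_add step1 step2).trans (le_of_eq ?_)
          rw [walkWeight_cons]
          push_cast
          ring

end key

/-- Replacing a cluster `W` by the dense distance graph on its border vertices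
(border vertices joined iff connected inside `W`, weighted by the shortest-path
distance in the induced subgraph `G[W]`) preserves all weighted distances among
the remaining vertices. -/
theorem wdist_dense_distance_graph {V : Type*} [Fintype V]
    (G : SimpleGraph V) (w : V → V → NNReal) (hw : ∀ x y, w x y = w y x)
    (W : Set V)
    (H : SimpleGraph ↥(Wᶜ ∪ borderSet G W))
    (wH : ↥(Wᶜ ∪ borderSet G W) → ↥(Wᶜ ∪ borderSet G W) → NNReal)
    (hwHsymm : ∀ x y, wH x y = wH y x)
    (hadj₁ : ∀ x y : ↥(Wᶜ ∪ borderSet G W),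
      ¬ (x.val ∈ borderSet G W ∧ y.val ∈ borderSet G W) →
      (H.Adj x y ↔ G.Adj x.val y.val))
    (hadj₂ : ∀ (x y : ↥(Wᶜ ∪ borderSet G W))
      (hx : x.val ∈ borderSet G W) (hy : y.val ∈ borderSet G W), x ≠ y →
      (H.Adj x y ↔ (G.induce W).Reachable ⟨x.val, hx.1⟩ ⟨y.val, hy.1⟩))
    (hwH₁ : ∀ x y : ↥(Wᶜ ∪ borderSet G W), H.Adj x y →
      ¬ (x.val ∈ borderSet G W ∧ y.val ∈ borderSet G W) → wH x y = w x.val y.val)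
    (hwH₂ : ∀ (x y : ↥(Wᶜ ∪ borderSet G W))
      (hx : x.val ∈ borderSet G W) (hy : y.val ∈ borderSet G W), H.Adj x y →
      (wH x y : ENNReal) =
        wdist (G.induce W) (fun a b => w a.val b.val) ⟨x.val, hx.1⟩ ⟨y.val, hy.1⟩) :
    ∀ x y : ↥(Wᶜ ∪ borderSet G W), wdist H wH x y = wdist G w x.val y.val := by
  intro x y
  apply le_antisymm
  · refine le_iInf fun p => ?_
    exact (ddg_key G w W H wH hadj₁ hadj₂ hwH₁ hwH₂ p.length).1
      x.val y.val x.2 y.2 p le_rfl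
  · refine le_iInf fun p => ?_
    induction p with
    | nil => exact (wdist_self_le w _).trans (zero_le')
    | @cons x v z h q ih =>
      by_cases hb : x.val ∈ borderSet G W ∧ v.val ∈ borderSet G W
      · have hwxv := hwH₂ x v hb.1 hb.2 h
        refine (wdist_triangle w x.val v.val z.val).trans ?_
        have h1 : wdist G w x.val v.val ≤ (wH x v : ENNReal) :=
          (wdist_le_wdist_induce w ⟨x.val, hb.1.1⟩ ⟨v.val, hb.2.1⟩).trans hwxv.ge
        refine (add_le_add h1 ih).trans (le_of_eq ?_)
        rw [walkWeight_cons]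
        push_cast
        ring
      · have hG : G.Adj x.val v.val := (hadj₁ x v hb).mp h
        have hwxv := hwH₁ x v h hb
        refine (wdist_adj_step w hG z.val).trans ?_
        rw [walkWeight_cons, hwxv]
        push_cast
        exact add_le_add_right ih _
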